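/- The set R* = {(x, 2^k · x) | x, k ∈ ℕ} ⊆ ℕ² is not a finite union of sets of the form b + P with b ∈ ℕ² and P ⊆ ℕ² periodic. -/
import Mathlib


/-- `R* = {(x, 2^k · x) | x, k ∈ ℕ}`. -/
def Rstar : Set (ℕ × ℕ) := {p | ∃ x k : ℕ, p = (x, 2 ^ k * x)}

/-- A subset of ℕ² is periodic if it contains 0 and is closed under addition. -/
def IsPeriodic2 (P : Set (ℕ × ℕ)) : Prop :=
  (0, 0) ∈ P ∧ ∀ x ∈ P, ∀ y ∈ P, x + y ∈ P

theorem stmt_8 :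
    ¬ ∃ (N : ℕ) (b : Fin N → ℕ × ℕ) (P : Fin N → Set (ℕ × ℕ)),
      (∀ i, IsPeriodic2 (P i)) ∧
      Rstar = ⋃ i, (fun p => b i + p) '' P i := by
  rintro ⟨N, b, P, hP, hR⟩
  -- each (1, 2^k) is in the union
  have hmem : ∀ k : ℕ, ∃ i : Fin N, ∃ p ∈ P i, b i + p = (1, 2 ^ k) := by
    intro k
    have h1 : ((1 : ℕ), 2 ^ k) ∈ Rstar := ⟨1, k, by simp⟩
    rw [hR] at h1
    simpa using h1
  choose f p hpP hpe using hmem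
  obtain ⟨i, hi⟩ := Finite.exists_infinite_fiber f
  have hinf : (f ⁻¹' {i}).Infinite := Set.infinite_coe_iff.mp hi
  obtain ⟨k0, hk0, _⟩ := hinf.exists_gt 0
  obtain ⟨k, hk, hk0k⟩ := hinf.exists_gt k0
  obtain ⟨m, hm, hkm⟩ := hinf.exists_gt k
  simp only [Set.mem_preimage, Set.mem_singleton_iff] at hk0 hk hm
  -- closure under addition
  have hsum : p k + p m ∈ P i := by
    have h1 := hpP k; have h2 := hpP m
    rw [hk] at h1; rw [hm] at h2
    exact (hP i).2 _ h1 _ h2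
  have hin : b i + (p k + p m) ∈ Rstar := by
    rw [hR]
    exact Set.mem_iUnion.mpr ⟨i, ⟨p k + p m, hsum, rfl⟩⟩
  obtain ⟨x, j, hxj⟩ := hin
  have ek := hpe k; have em := hpe m; have ek0 := hpe k0
  rw [hk] at ek; rw [hm] at em; rw [hk0] at ek0
  have ek1 : (b i).1 + (p k).1 = 1 := congrArg Prod.fst ek
  have ek2 : (b i).2 + (p k).2 = 2 ^ k := congrArg Prod.snd ek
  have em1 : (b i).1 + (p m).1 = 1 := congrArg Prod.fst em
  have em2 : (b i).2 + (p m).2 = 2 ^ m := congrArg Prod.snd em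
  have ek02 : (b i).2 + (p k0).2 = 2 ^ k0 := congrArg Prod.snd ek0
  have hx1 : (b i).1 + ((p k).1 + (p m).1) = x := congrArg Prod.fst hxj
  have hx2 : (b i).2 + ((p k).2 + (p m).2) = 2 ^ j * x := congrArg Prod.snd hxj
  -- b2 < 2^k
  have hb2 : (b i).2 < 2 ^ k := by
    have : (b i).2 ≤ 2 ^ k0 := by omega
    exact lt_of_le_of_lt this (Nat.pow_lt_pow_right one_lt_two hk0k)
  have hkm' : 2 ^ k < 2 ^ m := Nat.pow_lt_pow_right one_lt_two hkm
  -- the second coordinate s is a power of 2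
  have hxval : x = 1 ∨ x = 2 := by omega
  have hpow : ∃ t : ℕ, (b i).2 + ((p k).2 + (p m).2) = 2 ^ t := by
    rcases hxval with h | h
    · exact ⟨j, by rw [hx2, h, mul_one]⟩
    · exact ⟨j + 1, by rw [hx2, h, pow_succ]⟩
  obtain ⟨t, ht⟩ := hpow
  have hlow : 2 ^ m < 2 ^ t := by omega
  have hhigh : 2 ^ t < 2 ^ (m + 1) := by
    have : 2 ^ (m + 1) = 2 ^ m * 2 := pow_succ 2 m
    omega
  have h1 : m < t := (Nat.pow_lt_pow_iff_right one_lt_two).mp hlow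
  have h2 : t < m + 1 := (Nat.pow_lt_pow_iff_right one_lt_two).mp hhigh
  omega
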